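/- The maximum over π ∈ S_n of the minimum star-transposition factorization length of π equals ⌊3(n−1)/2⌋; equivalently, the diameter of the star graph ST_n (the Cayley graph of S_n with generating set {(1 i) : 2 ≤ i ≤ n}) is ⌊3(n−1)/2⌋. -/

import Mathlib

open Equiv

namespace St14

set_option linter.unusedSectionVars false
set_option linter.unusedVariables false

section FinN
variable {n : ℕ}


variable {n : ℕ}

/-- A list of star swaps fixes any point not at the center and not in the index list. -/
lemma prod_fixed (z : Fin n) (is : List (Fin n)) (x : Fin n) (hxz : x ≠ z)
    (hx : x ∉ is) : (is.map (Equiv.swap z)).prod x = x := by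
  induction is with
  | nil => simp
  | cons i t ih =>
    simp only [List.mem_cons, not_or] at hx
    simp only [List.map_cons, List.prod_cons, Equiv.Perm.mul_apply]
    rw [ih hx.2]
    exact Equiv.swap_apply_of_ne_of_ne hxz hx.1

lemma prod_swaps_inv (z : Fin n) (is : List (Fin n)) :
    ((is.map (Equiv.swap z)).prod)⁻¹ = (is.reverse.map (Equiv.swap z)).prod := by
  induction is with
  | nil => simp
  | cons i t ih =>
    simp [List.prod_cons, mul_inv_rev, ih]

lemma prod_eq_imp (z : Fin n) (is : List (Fin n)) (x : Fin n) (hxz : x ≠ z)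
    (hx : x ∉ is) : ∀ y, (is.map (Equiv.swap z)).prod y = x → y = x := by
  intro y hy
  have h1 : ((is.map (Equiv.swap z)).prod)⁻¹ x = y := by
    rw [← hy]; simp
  rw [prod_swaps_inv] at h1
  rw [← h1]
  exact prod_fixed z is.reverse x hxz (by simpa using hx)


variable {n : ℕ}


lemma pair_not_both_once {z a b : Fin n} (haz : a ≠ z) (hbz : b ≠ z) (hab : a ≠ b)
    (is : List (Fin n)) : is.count a ≤ 1 → is.count b ≤ 1 →
    (is.map (Equiv.swap z)).prod a = b → (is.map (Equiv.swap z)).prod b = a → False := by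
  induction is using List.reverseRecOn with
  | nil => intro _ _ h _; simp at h; exact hab h
  | append_singleton t i ih =>
    intro hca hcb hpa hpb
    rw [List.map_append, List.prod_append] at hpa hpb
    simp only [List.map_cons, List.map_nil, List.prod_cons, List.prod_nil, mul_one,
      Equiv.Perm.mul_apply] at hpa hpb
    rcases eq_or_ne i a with hia | hia
    · subst hia
      have hat : i ∉ t := by
        rw [List.count_append] at hca
        simp at hca
        exact (List.count_eq_zero).1 (by omega)
      rw [Equiv.swap_apply_of_ne_of_ne hbz (Ne.symm hab)] at hpb
      exact hab (prod_eq_imp z t i haz hat b hpb).symm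
    · rcases eq_or_ne i b with hib | hib
      · subst hib
        have hbt : i ∉ t := by
          rw [List.count_append] at hcb
          simp at hcb
          exact (List.count_eq_zero).1 (by omega)
        rw [Equiv.swap_apply_of_ne_of_ne haz hia.symm] at hpa
        exact hia (prod_eq_imp z t i hbz hbt a hpa).symm
      · rw [Equiv.swap_apply_of_ne_of_ne haz (Ne.symm hia)] at hpa
        rw [Equiv.swap_apply_of_ne_of_ne hbz (Ne.symm hib)] at hpb
        rw [List.count_append] at hca hcb
        exact ih (by omega) (by omega) hpa hpb

lemma count_pos_of_moved {z : Fin n} {is : List (Fin n)} {x : Fin n} (hxz : x ≠ z)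
    (h : (is.map (Equiv.swap z)).prod x ≠ x) : 1 ≤ is.count x := by
  by_contra hc
  exact h (prod_fixed z is x hxz (by
    have : is.count x = 0 := by omega
    exact (List.count_eq_zero).1 this))

lemma three_le_counts {z a b : Fin n} (haz : a ≠ z) (hbz : b ≠ z) (hab : a ≠ b)
    (is : List (Fin n)) (hpa : (is.map (Equiv.swap z)).prod a = b)
    (hpb : (is.map (Equiv.swap z)).prod b = a) :
    3 ≤ is.count a + is.count b := by
  have h1 : 1 ≤ is.count a := count_pos_of_moved haz (by rw [hpa]; exact hab.symm)
  have h2 : 1 ≤ is.count b := count_pos_of_moved hbz (by rw [hpb]; exact hab)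
  by_contra hc
  exact pair_not_both_once haz hbz hab is (by omega) (by omega) hpa hpb

end FinN

section Gen
variable {α : Type*} [DecidableEq α]

variable {α : Type*} [DecidableEq α]

lemma sum_map_add (l : List α) (f g : α → ℕ) :
    (l.map (fun v => f v + g v)).sum = (l.map f).sum + (l.map g).sum := by
  induction l with
  | nil => simp
  | cons v t ih => simp [ih]; ring

lemma sum_ite_of_not_mem (l : List α) (j : α) (h : j ∉ l) :
    (l.map (fun v => if v = j then (1:ℕ) else 0)).sum = 0 := by
  induction l with
  | nil => simp
  | cons v t ih =>
    simp only [List.mem_cons, not_or] at h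
    rw [List.map_cons, List.sum_cons, if_neg (Ne.symm h.1), ih h.2]

lemma sum_ite_le_one (l : List α) (j : α) (h : l.Nodup) :
    (l.map (fun v => if v = j then (1:ℕ) else 0)).sum ≤ 1 := by
  induction l with
  | nil => simp
  | cons v t ih =>
    rcases List.nodup_cons.1 h with ⟨hv, ht⟩
    by_cases hvj : v = j
    · subst hvj
      simp [sum_ite_of_not_mem t v hv]
    · simp only [List.map_cons, List.sum_cons, if_neg hvj, Nat.zero_add]
      exact ih ht

lemma sum_count_le (vs is : List α) (h : vs.Nodup) :
    (vs.map (fun v => is.count v)).sum ≤ is.length := by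
  induction is with
  | nil => simp
  | cons j t ih =>
    have hc : ∀ v : α, (j :: t).count v = t.count v + (if v = j then 1 else 0) := by
      intro v
      rw [List.count_cons]
      rcases eq_or_ne v j with hvj | hvj
      · simp [hvj]
      · simp [hvj, Ne.symm hvj]
    calc (vs.map (fun v => (j :: t).count v)).sum
        = (vs.map (fun v => t.count v + (if v = j then 1 else 0))).sum := by
          congr 1; exact List.map_congr_left (fun v _ => hc v)
      _ = (vs.map (fun v => t.count v)).sum
            + (vs.map (fun v => if v = j then (1:ℕ) else 0)).sum := sum_map_add ..
      _ ≤ t.length + 1 := Nat.add_le_add ih (sum_ite_le_one vs j h)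
      _ = (j :: t).length := by simp

variable {α : Type*} [DecidableEq α]

def flat (ps : List (α × α)) : List α := ps.flatMap fun p => [p.1, p.2]

@[simp] lemma flat_nil : flat ([] : List (α × α)) = [] := rfl
@[simp] lemma flat_cons (p : α × α) (t : List (α × α)) :
    flat (p :: t) = p.1 :: p.2 :: flat t := rfl

lemma mem_flat {ps : List (α × α)} {x : α} :
    x ∈ flat ps ↔ ∃ p ∈ ps, x = p.1 ∨ x = p.2 := by
  induction ps with
  | nil => simp
  | cons p t ih =>
    simp [ih]
    constructor
    · rintro (h | h | ⟨q, hq, h⟩)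
      · exact Or.inl (Or.inl h)
      · exact Or.inl (Or.inr h)
      · exact Or.inr ⟨q, hq, h⟩
    · rintro (h | ⟨q, hq, h⟩)
      · rcases h with h | h
        · exact Or.inl h
        · exact Or.inr (Or.inl h)
      · exact Or.inr (Or.inr ⟨q, hq, h⟩)

def pprod (ps : List (α × α)) : Equiv.Perm α := (ps.map fun p => Equiv.swap p.1 p.2).prod

@[simp] lemma pprod_nil : pprod ([] : List (α × α)) = 1 := rfl
@[simp] lemma pprod_cons (p : α × α) (t : List (α × α)) :
    pprod (p :: t) = Equiv.swap p.1 p.2 * pprod t := by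
  simp [pprod]

lemma pprod_fixed (ps : List (α × α)) (x : α) (hx : x ∉ flat ps) : pprod ps x = x := by
  induction ps with
  | nil => simp
  | cons p t ih =>
    simp only [flat_cons, List.mem_cons, not_or] at hx
    simp only [pprod_cons, Equiv.Perm.mul_apply, ih hx.2.2]
    exact Equiv.swap_apply_of_ne_of_ne hx.1 hx.2.1

lemma pprod_pair (ps : List (α × α)) (hnd : (flat ps).Nodup) :
    ∀ p ∈ ps, pprod ps p.1 = p.2 ∧ pprod ps p.2 = p.1 := by
  induction ps with
  | nil => simp
  | cons q t ih =>
    simp only [flat_cons, List.nodup_cons, List.mem_cons, not_or] at hnd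
    intro p hp
    rcases List.mem_cons.1 hp with heq | hp
    · subst heq
      have h1 : p.1 ∉ flat t := hnd.1.2
      have h2 : p.2 ∉ flat t := hnd.2.1
      simp only [pprod_cons, Equiv.Perm.mul_apply, pprod_fixed t _ h1, pprod_fixed t _ h2]
      exact ⟨Equiv.swap_apply_left _ _, Equiv.swap_apply_right _ _⟩
    · have ht := ih hnd.2.2 p hp
      have hp1 : p.1 ∈ flat t := mem_flat.2 ⟨p, hp, Or.inl rfl⟩
      have hp2 : p.2 ∈ flat t := mem_flat.2 ⟨p, hp, Or.inr rfl⟩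
      have hq1a : q.1 ≠ p.1 := fun h => hnd.1.2 (h ▸ hp1)
      have hq1b : q.1 ≠ p.2 := fun h => hnd.1.2 (h ▸ hp2)
      have hq2a : q.2 ≠ p.1 := fun h => hnd.2.1 (h ▸ hp1)
      have hq2b : q.2 ≠ p.2 := fun h => hnd.2.1 (h ▸ hp2)
      simp only [pprod_cons, Equiv.Perm.mul_apply, ht.1, ht.2]
      exact ⟨Equiv.swap_apply_of_ne_of_ne (Ne.symm hq1b) (Ne.symm hq2b),
        Equiv.swap_apply_of_ne_of_ne (Ne.symm hq1a) (Ne.symm hq2a)⟩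

end Gen

section Gen2
variable {α : Type*} [DecidableEq α] [Fintype α]

variable {α : Type*} [DecidableEq α] [Fintype α]

/-- Case: z in a cycle, remove preimage of z; generic step. σ = swap z i * π where π i = z. -/
lemma support_step_a {π : Equiv.Perm α} {z i : α} (hiz : i ≠ z) (hi : π i = z)
    (hz2 : π z ≠ i) (hz : π z ≠ z) :
    (Equiv.swap z i * π).support = π.support.erase i ∧ (Equiv.swap z i * π) z = π z := by
  constructor
  · ext x
    simp only [Equiv.Perm.mem_support, Finset.mem_erase, Equiv.Perm.mul_apply]
    rcases eq_or_ne x i with rfl | hxi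
    · simp [hi, Equiv.swap_apply_left]
    · simp only [hxi, not_false_iff, true_and, ne_eq]
      rcases eq_or_ne (π x) z with hpx | hpx
      · -- π x = z → x = i, contradiction
        exact absurd (π.injective (hpx.trans hi.symm)) hxi
      · rcases eq_or_ne (π x) i with hpi | hpi
        · -- swap z i (π x) = z; x ≠ z since π z ≠ i
          rw [hpi, Equiv.swap_apply_right]
          have hxz : x ≠ z := fun h => hz2 (h ▸ hpi)
          have hpxx : π x ≠ x := by rw [hpi]; exact Ne.symm hxi
          constructor
          · intro _; exact Ne.symm hxi
          · intro _; exact Ne.symm hxz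
        · rw [Equiv.swap_apply_of_ne_of_ne hpx hpi]
  · rw [Equiv.Perm.mul_apply, Equiv.swap_apply_of_ne_of_ne hz hz2]


variable {α : Type*} [DecidableEq α] [Fintype α]

/-- Case: z in a 2-cycle with i. σ = swap z i * π kills both. -/
lemma support_step_b {π : Equiv.Perm α} {z i : α} (hiz : i ≠ z) (hi : π i = z)
    (hz2 : π z = i) :
    (Equiv.swap z i * π).support = (π.support.erase i).erase z ∧
    (Equiv.swap z i * π) z = z := by
  have hσz : (Equiv.swap z i * π) z = z := by
    rw [Equiv.Perm.mul_apply, hz2, Equiv.swap_apply_right]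
  refine ⟨?_, hσz⟩
  ext x
  simp only [Equiv.Perm.mem_support, Finset.mem_erase, Equiv.Perm.mul_apply]
  rcases eq_or_ne x z with rfl | hxz
  · simp [hz2, Equiv.swap_apply_right]
  · rcases eq_or_ne x i with rfl | hxi
    · simp [hi, Equiv.swap_apply_left]
    · have hp1 : π x ≠ z := fun h => hxi (π.injective (h.trans hi.symm))
      have hp2 : π x ≠ i := fun h => hxz (π.injective (h.trans hz2.symm))
      rw [Equiv.swap_apply_of_ne_of_ne hp1 hp2]
      simp [hxz, hxi]

/-- Case: z fixed by π, splice z in place of j = π⁻¹ i. σ = swap z j * (swap z i * π). -/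
lemma support_step_c {π : Equiv.Perm α} {z i j : α} (hπz : π z = z) (hiz : i ≠ z)
    (hjz : j ≠ z) (hij : j ≠ i) (hj : π j = i) :
    (Equiv.swap z j * (Equiv.swap z i * π)).support = insert z (π.support.erase j) ∧
    (Equiv.swap z j * (Equiv.swap z i * π)) z = i := by
  have hσz : (Equiv.swap z j * (Equiv.swap z i * π)) z = i := by
    rw [Equiv.Perm.mul_apply, Equiv.Perm.mul_apply, hπz, Equiv.swap_apply_left,
      Equiv.swap_apply_of_ne_of_ne hiz (fun h => hij h.symm)]
  refine ⟨?_, hσz⟩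
  ext x
  simp only [Equiv.Perm.mem_support, Finset.mem_erase, Finset.mem_insert,
    Equiv.Perm.mul_apply]
  rcases eq_or_ne x z with hxz | hxz
  · subst hxz
    have : (Equiv.swap x j) ((Equiv.swap x i) (π x)) = i := hσz
    simp [this]
    exact hiz
  · rcases eq_or_ne x j with hxj | hxj
    · subst hxj
      have : (Equiv.swap z x) ((Equiv.swap z i) (π x)) = x := by
        rw [hj, Equiv.swap_apply_right, Equiv.swap_apply_left]
      simp [this, hxz]
    · have hp1 : π x ≠ z := fun h => hxz (π.injective (h.trans hπz.symm))
      have hp2 : π x ≠ i := fun h => hxj (π.injective (h.trans hj.symm))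
      rcases eq_or_ne (π x) j with hpj | hpj
      · have : (Equiv.swap z j) ((Equiv.swap z i) (π x)) = z := by
          rw [hpj, Equiv.swap_apply_of_ne_of_ne hjz (fun h => hij h),
            Equiv.swap_apply_right]
        have hmv : π x ≠ x := by rw [hpj]; exact fun h => hxj h.symm
        simp [this, hxz, hmv, Ne.symm hxz, hxj]
      · rw [Equiv.swap_apply_of_ne_of_ne hp1 hp2, Equiv.swap_apply_of_ne_of_ne hp1 hpj]
        simp [hxz, hxj]

variable {α : Type*} [DecidableEq α] [Fintype α]


/-- cost potential -/
def gf (z : α) (π : Equiv.Perm α) : ℕ :=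
  if π z = z then π.support.card + π.support.card / 2
  else π.support.card + π.support.card / 2 - 2

lemma exists_factorization (z : α) : ∀ N (π : Equiv.Perm α), gf z π ≤ N →
    ∃ l : List (Equiv.Perm α), (∀ τ ∈ l, ∃ i, i ≠ z ∧ τ = Equiv.swap z i) ∧
      l.prod = π ∧ l.length ≤ gf z π := by
  intro N
  induction N with
  | zero =>
    intro π hπ
    rcases eq_or_ne π 1 with rfl | hπ1
    · exact ⟨[], by simp, by simp, by simp⟩
    · exfalso
      have hM : 1 < π.support.card := Equiv.Perm.one_lt_card_support_of_ne_one hπ1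
      unfold gf at hπ
      split at hπ <;> omega
  | succ N ih =>
    intro π hπ
    rcases eq_or_ne π 1 with rfl | hπ1
    · exact ⟨[], by simp, by simp, by simp⟩
    have hM : 1 < π.support.card := Equiv.Perm.one_lt_card_support_of_ne_one hπ1
    set M := π.support.card with hMdef
    rcases eq_or_ne (π z) z with hz | hz
    · -- z fixed, π ≠ 1 : two-step splice
      obtain ⟨i, hi⟩ : π.support.Nonempty := by
        rw [Finset.nonempty_iff_ne_empty, ne_eq, Equiv.Perm.support_eq_empty_iff]
        exact hπ1
      have hisup := Equiv.Perm.mem_support.1 hi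
      have hiz : i ≠ z := fun h => hisup (by rw [h, hz])
      have hj : π (π⁻¹ i) = i := Equiv.apply_symm_apply π i
      set j := π⁻¹ i with hjdef
      have hij : j ≠ i := fun h => hisup (by have := hj; rwa [h] at this)
      have hjz : j ≠ z := by
        intro h
        have := hj
        rw [h, hz] at this
        exact hiz this.symm
      obtain ⟨hsupp, hσz⟩ := support_step_c hz hiz hjz hij hj
      have hjsup : j ∈ π.support := Equiv.Perm.mem_support.2 (by
        rw [hj]; exact fun h => hij h.symm)
      have hznot : z ∉ π.support := by simp [Equiv.Perm.mem_support, hz]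
      have hcard : (Equiv.swap z j * (Equiv.swap z i * π)).support.card = M := by
        rw [hsupp, Finset.card_insert_of_notMem (fun h => hznot (Finset.mem_of_mem_erase h)),
          Finset.card_erase_of_mem hjsup]
        omega
      have hσzne : (Equiv.swap z j * (Equiv.swap z i * π)) z ≠ z := by
        rw [hσz]; exact hiz
      have hgσ : gf z (Equiv.swap z j * (Equiv.swap z i * π)) = M + M / 2 - 2 := by
        unfold gf
        rw [if_neg hσzne, hcard]
      have hgπ : gf z π = M + M / 2 := by unfold gf; rw [if_pos hz]
      obtain ⟨l', hval, hprod, hlen⟩ :=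
        ih (Equiv.swap z j * (Equiv.swap z i * π)) (by rw [hgσ]; rw [hgπ] at hπ; omega)
      refine ⟨Equiv.swap z i :: Equiv.swap z j :: l', ?_, ?_, ?_⟩
      · intro τ hτ
        simp only [List.mem_cons] at hτ
        rcases hτ with h | h | h
        · exact h ▸ ⟨i, hiz, rfl⟩
        · exact h ▸ ⟨j, hjz, rfl⟩
        · exact hval τ h
      · simp only [List.prod_cons, hprod]
        rw [Equiv.swap_mul_self_mul, Equiv.swap_mul_self_mul]
      · simp only [List.length_cons]
        rw [hgσ] at hlen
        rw [hgπ]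
        omega
    · -- z moved
      have hi : π (π⁻¹ z) = z := Equiv.apply_symm_apply π z
      set i := π⁻¹ z with hidef
      have hiz : i ≠ z := fun h => hz (by rwa [h] at hi)
      have hzsup : z ∈ π.support := Equiv.Perm.mem_support.2 hz
      have hisup : i ∈ π.support := Equiv.Perm.mem_support.2 (by
        rw [hi]; exact Ne.symm hiz)
      have hgπ : gf z π = M + M / 2 - 2 := by unfold gf; rw [if_neg hz]
      rcases eq_or_ne (π z) i with hz2 | hz2
      · obtain ⟨hsupp, hσz⟩ := support_step_b hiz hi hz2
        have hcard : (Equiv.swap z i * π).support.card = M - 2 := by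
          rw [hsupp, Finset.card_erase_of_mem (Finset.mem_erase.2 ⟨Ne.symm hiz, hzsup⟩),
            Finset.card_erase_of_mem hisup]
          omega
        have hgσ : gf z (Equiv.swap z i * π) = (M - 2) + (M - 2) / 2 := by
          unfold gf
          rw [if_pos hσz, hcard]
        obtain ⟨l', hval, hprod, hlen⟩ :=
          ih (Equiv.swap z i * π) (by rw [hgσ]; rw [hgπ] at hπ; omega)
        refine ⟨Equiv.swap z i :: l', ?_, ?_, ?_⟩
        · intro τ hτ
          simp only [List.mem_cons] at hτ
          rcases hτ with h | h
          · exact h ▸ ⟨i, hiz, rfl⟩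
          · exact hval τ h
        · simp only [List.prod_cons, hprod]
          rw [Equiv.swap_mul_self_mul]
        · simp only [List.length_cons]
          rw [hgσ] at hlen
          rw [hgπ]
          omega
      · obtain ⟨hsupp, hσz⟩ := support_step_a hiz hi hz2 hz
        have hσne : (Equiv.swap z i * π) ≠ 1 := by
          intro h
          rw [h] at hσz
          exact hz (by simpa using hσz.symm)
        have hM2 : 1 < (Equiv.swap z i * π).support.card :=
          Equiv.Perm.one_lt_card_support_of_ne_one hσne
        have hcard : (Equiv.swap z i * π).support.card = M - 1 := by
          rw [hsupp, Finset.card_erase_of_mem hisup]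
        have hσzne : (Equiv.swap z i * π) z ≠ z := by rw [hσz]; exact hz
        have hgσ : gf z (Equiv.swap z i * π) = (M - 1) + (M - 1) / 2 - 2 := by
          unfold gf
          rw [if_neg hσzne, hcard]
        have hM3 : 3 ≤ M := by omega
        obtain ⟨l', hval, hprod, hlen⟩ :=
          ih (Equiv.swap z i * π) (by rw [hgσ]; rw [hgπ] at hπ; omega)
        refine ⟨Equiv.swap z i :: l', ?_, ?_, ?_⟩
        · intro τ hτ
          simp only [List.mem_cons] at hτ
          rcases hτ with h | h
          · exact h ▸ ⟨i, hiz, rfl⟩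
          · exact hval τ h
        · simp only [List.prod_cons, hprod]
          rw [Equiv.swap_mul_self_mul]
        · simp only [List.length_cons]
          rw [hgσ] at hlen
          rw [hgπ]
          omega

end Gen2

section Gen3
variable {α : Type*} [DecidableEq α]



lemma triple_swap {α : Type*} [DecidableEq α] {z a b : α} (haz : a ≠ z) (hbz : b ≠ z)
    (hba : b ≠ a) : Equiv.swap z a * Equiv.swap z b * Equiv.swap z a = Equiv.swap a b := by
  have h := Equiv.swap_mul_swap_mul_swap hbz hba
  rwa [Equiv.swap_comm b z] at h


def facList {α : Type*} [DecidableEq α] (z : α) (ps : List (α × α)) : List (Equiv.Perm α) :=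
  ps.flatMap fun p => [Equiv.swap z p.1, Equiv.swap z p.2, Equiv.swap z p.1]

lemma facList_length {α : Type*} [DecidableEq α] (z : α) (ps : List (α × α)) :
    (facList z ps).length = 3 * ps.length := by
  induction ps with
  | nil => rfl
  | cons p t ih =>
    simp only [facList, List.flatMap_cons] at ih ⊢
    simp [ih]
    ring

lemma facList_prod {α : Type*} [DecidableEq α] (z : α) (ps : List (α × α))
    (h : ∀ p ∈ ps, p.1 ≠ z ∧ p.2 ≠ z ∧ p.2 ≠ p.1) :
    (facList z ps).prod = pprod ps := by
  induction ps with
  | nil => rfl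
  | cons p t ih =>
    have hp := h p (List.mem_cons_self ..)
    simp only [facList, List.flatMap_cons, List.prod_append, List.prod_cons, List.prod_nil,
      mul_one] at ih ⊢
    rw [ih (fun q hq => h q (List.mem_cons_of_mem _ hq))]
    simp only [pprod, List.map_cons, List.prod_cons]
    rw [← triple_swap hp.1 hp.2.1 hp.2.2]
    simp [mul_assoc]

lemma facList_valid {α : Type*} [DecidableEq α] (z : α) (ps : List (α × α))
    (h : ∀ p ∈ ps, p.1 ≠ z ∧ p.2 ≠ z ∧ p.2 ≠ p.1) :
    ∀ τ ∈ facList z ps, ∃ i, i ≠ z ∧ τ = Equiv.swap z i := by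
  intro τ hτ
  simp only [facList, List.mem_flatMap, List.mem_cons, List.not_mem_nil, or_false] at hτ
  obtain ⟨p, hp, hc⟩ := hτ
  rcases hc with rfl | rfl | rfl
  · exact ⟨p.1, (h p hp).1, rfl⟩
  · exact ⟨p.2, (h p hp).2.1, rfl⟩
  · exact ⟨p.1, (h p hp).1, rfl⟩

lemma extract_is {α : Type*} [DecidableEq α] (z : α) :
    ∀ l : List (Equiv.Perm α), (∀ τ ∈ l, ∃ i, i ≠ z ∧ τ = Equiv.swap z i) →
    ∃ is : List α, l = is.map (Equiv.swap z) ∧ ∀ i ∈ is, i ≠ z := by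
  intro l
  induction l with
  | nil => exact fun _ => ⟨[], rfl, by simp⟩
  | cons τ t ih =>
    intro h
    obtain ⟨i, hiz, hτ⟩ := h τ (List.mem_cons_self ..)
    obtain ⟨is, his, hvs⟩ := ih (fun τ' hτ' => h τ' (List.mem_cons_of_mem _ hτ'))
    refine ⟨i :: is, by rw [List.map_cons, ← his, hτ], ?_⟩
    intro i' hi'
    rcases List.mem_cons.1 hi' with rfl | hi'
    · exact hiz
    · exact hvs i' hi'

lemma flat_sum_ge {α : Type*} (ps : List (α × α)) (c : α → ℕ)
    (h : ∀ p ∈ ps, 3 ≤ c p.1 + c p.2) :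
    3 * ps.length ≤ ((flat ps).map c).sum := by
  induction ps with
  | nil => simp
  | cons p t ih =>
    have hp := h p (List.mem_cons_self ..)
    have ht := ih (fun q hq => h q (List.mem_cons_of_mem _ hq))
    simp only [flat_cons, List.map_cons, List.sum_cons, List.length_cons]
    omega


end Gen3



def pairs (n : ℕ) : List (Fin n × Fin n) :=
  (List.finRange ((n-1)/2)).map fun j =>
    (⟨2*j.1+1, by have h := j.2; omega⟩, ⟨2*j.1+2, by have h := j.2; omega⟩)

lemma pairs_length (n : ℕ) : (pairs n).length = (n-1)/2 := by simp [pairs]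

lemma mem_pairs {n : ℕ} {p : Fin n × Fin n} (hp : p ∈ pairs n) :
    ∃ j : ℕ, j < (n-1)/2 ∧ p.1.val = 2*j+1 ∧ p.2.val = 2*j+2 := by
  simp only [pairs, List.mem_map, List.mem_finRange, true_and] at hp
  obtain ⟨j, hj⟩ := hp
  exact ⟨j.1, j.2, by rw [← hj], by rw [← hj]⟩

lemma flat_pairs_nodup (n : ℕ) : (flat (pairs n)).Nodup := by
  unfold flat pairs
  rw [List.flatMap_map]
  rw [List.nodup_flatMap]
  constructor
  · intro j _
    rw [List.nodup_cons]
    refine ⟨?_, by simp⟩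
    simp only [List.mem_singleton]
    intro h
    have : 2*j.1+1 = 2*j.1+2 := congrArg Fin.val h
    omega
  · have hplt := List.pairwise_lt_finRange ((n-1)/2)
    refine hplt.imp ?_
    intro a b hab
    intro x hx1 hx2
    simp only [Function.comp] at hx1 hx2
    simp only [List.mem_cons, List.mem_singleton, List.not_mem_nil, or_false] at hx1 hx2
    have hlt : a.1 < b.1 := hab
    rcases hx1 with h1 | h1 <;> rcases hx2 with h2 | h2 <;>
      · rw [h2] at h1
        have := congrArg Fin.val h1
        simp only [] at this
        omega



lemma master (n : ℕ) (hn : 2 ≤ n) (z : Fin n) (hz0 : z.val = 0) :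
    IsGreatest {k : ℕ | ∃ π : Equiv.Perm (Fin n),
        IsLeast {m : ℕ | ∃ l : List (Equiv.Perm (Fin n)),
          (∀ τ ∈ l, ∃ i : Fin n, i ≠ z ∧ τ = Equiv.swap z i) ∧
          l.prod = π ∧ l.length = m} k} (3 * (n - 1) / 2) := by
  have hpair : ∀ p ∈ pairs n, p.1 ≠ z ∧ p.2 ≠ z ∧ p.2 ≠ p.1 := by
    intro p hp
    obtain ⟨j, hj, h1, h2⟩ := mem_pairs hp
    refine ⟨?_, ?_, ?_⟩ <;> (intro h; have := congrArg Fin.val h; omega)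
  have hnd := flat_pairs_nodup n
  have hact := pprod_pair (pairs n) hnd
  constructor
  · -- membership : the extremal permutation
    rcases Nat.even_or_odd n with he | ho
    · -- n even
      have hn2 : n % 2 = 0 := Nat.even_iff.1 he
      set e : Fin n := ⟨n-1, by omega⟩ with hedef
      have hez : e ≠ z := by
        intro h
        have := congrArg Fin.val h
        rw [hz0] at this
        simp only [hedef] at this
        omega
      have heflat : e ∉ flat (pairs n) := by
        intro h
        obtain ⟨p, hp, hc⟩ := mem_flat.1 h
        obtain ⟨j, hj, h1, h2⟩ := mem_pairs hp
        rcases hc with hc | hc <;>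
        · have := congrArg Fin.val hc
          simp only [hedef] at this
          omega
      have hfix : pprod (pairs n) e = e := pprod_fixed _ _ heflat
      have hpe : ∀ p ∈ pairs n, p.1 ≠ e ∧ p.2 ≠ e := by
        intro p hp
        obtain ⟨j, hj, h1, h2⟩ := mem_pairs hp
        constructor <;>
        · intro h
          have := congrArg Fin.val h
          simp only [hedef] at this
          omega
      have hact2 : ∀ p ∈ pairs n,
          (Equiv.swap z e * pprod (pairs n)) p.1 = p.2 ∧
          (Equiv.swap z e * pprod (pairs n)) p.2 = p.1 := by
        intro p hp
        constructor
        · rw [Equiv.Perm.mul_apply, (hact p hp).1,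
            Equiv.swap_apply_of_ne_of_ne (hpair p hp).2.1 (hpe p hp).2]
        · rw [Equiv.Perm.mul_apply, (hact p hp).2,
            Equiv.swap_apply_of_ne_of_ne (hpair p hp).1 (hpe p hp).1]
      have hacte : (Equiv.swap z e * pprod (pairs n)) e = z := by
        rw [Equiv.Perm.mul_apply, hfix, Equiv.swap_apply_right]
      refine ⟨Equiv.swap z e * pprod (pairs n),
        ⟨⟨Equiv.swap z e :: facList z (pairs n), ?_, ?_, ?_⟩, ?_⟩⟩
      · intro τ hτ
        rcases List.mem_cons.1 hτ with h | h
        · exact ⟨e, hez, h⟩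
        · exact facList_valid z _ hpair τ h
      · rw [List.prod_cons, facList_prod z _ hpair]
      · rw [List.length_cons, facList_length, pairs_length]
        omega
      · rintro k ⟨l, hval, hprod, hlen⟩
        obtain ⟨is, rfl, hisz⟩ := extract_is z l hval
        have hcount : ∀ p ∈ pairs n, 3 ≤ is.count p.1 + is.count p.2 := by
          intro p hp
          refine three_le_counts (hpair p hp).1 (hpair p hp).2.1
            (fun hEq => (hpair p hp).2.2 hEq.symm) is ?_ ?_
          · rw [hprod]; exact (hact2 p hp).1
          · rw [hprod]; exact (hact2 p hp).2
        have hce : 1 ≤ is.count e := by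
          refine count_pos_of_moved hez ?_
          rw [hprod, hacte]
          exact Ne.symm hez
        have h1 := flat_sum_ge (pairs n) (fun v => is.count v) hcount
        have h2 := sum_count_le (e :: flat (pairs n)) is (List.nodup_cons.2 ⟨heflat, hnd⟩)
        rw [List.map_cons, List.sum_cons] at h2
        rw [pairs_length] at h1
        rw [List.length_map] at hlen
        omega
    · -- n odd
      have hn2 : n % 2 = 1 := Nat.odd_iff.1 ho
      refine ⟨pprod (pairs n), ⟨⟨facList z (pairs n), facList_valid z _ hpair,
        facList_prod z _ hpair, ?_⟩, ?_⟩⟩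
      · rw [facList_length, pairs_length]
        omega
      · rintro k ⟨l, hval, hprod, hlen⟩
        obtain ⟨is, rfl, hisz⟩ := extract_is z l hval
        have hcount : ∀ p ∈ pairs n, 3 ≤ is.count p.1 + is.count p.2 := by
          intro p hp
          refine three_le_counts (hpair p hp).1 (hpair p hp).2.1
            (fun hEq => (hpair p hp).2.2 hEq.symm) is ?_ ?_
          · rw [hprod]; exact (hact p hp).1
          · rw [hprod]; exact (hact p hp).2
        have h1 := flat_sum_ge (pairs n) (fun v => is.count v) hcount
        have h2 := sum_count_le (flat (pairs n)) is hnd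
        rw [pairs_length] at h1
        rw [List.length_map] at hlen
        omega
  · -- upper bound
    rintro k ⟨π, hL⟩
    obtain ⟨l, hval, hprod, hlen⟩ := exists_factorization z (gf z π) π le_rfl
    have hk2 : k ≤ l.length := hL.2 ⟨l, hval, hprod, rfl⟩
    have hcu : π.support.card ≤ n := by
      simpa using Finset.card_le_univ π.support
    have hgB : gf z π ≤ 3 * (n - 1) / 2 := by
      unfold gf
      split
      · rename_i h
        have hsub : π.support ⊆ Finset.univ.erase z := by
          intro x hx
          exact Finset.mem_erase.2 ⟨fun heq => (Equiv.Perm.mem_support.1 hx) (heq ▸ h),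
            Finset.mem_univ x⟩
        have hle := Finset.card_le_card hsub
        simp [Finset.card_erase_of_mem (Finset.mem_univ z)] at hle
        omega
      · omega
    omega

end St14

theorem stmt14 (n : ℕ) (hn : 2 ≤ n) :
    IsGreatest {k : ℕ | ∃ π : Equiv.Perm (Fin n),
        IsLeast {m : ℕ | ∃ l : List (Equiv.Perm (Fin n)),
          (∀ τ ∈ l, ∃ i : Fin n, i ≠ (⟨0, by omega⟩ : Fin n) ∧
            τ = Equiv.swap (⟨0, by omega⟩ : Fin n) i) ∧
          l.prod = π ∧ l.length = m} k}
      (3 * (n - 1) / 2) :=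
  St14.master n hn ⟨0, by omega⟩ rfl
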